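/- Let c: ℝ → ℝ, and let e: ℝ → ℝ be differentiable with e > 0 and e'(x) = e(x)·x/((c(x) − x)(x + 1)) wherever c(x) ≠ x and x ≠ −1. Define r(ρ,p) = ρ/e(p/ρ) for ρ > 0. Then at any point (ρ,p) with ρ > 0, π := p/ρ satisfying π ≠ 0, π ≠ −1 and c(π) ≠ π: ∂_p r ≠ 0 and (1/∂_p r)(r/(ρ+p) − ∂_ρ r) = c(π). -/

import Mathlib

theorem stmt_12 (c e : ℝ → ℝ)
    (he : Differentiable ℝ e) (hepos : ∀ x, 0 < e x)
    (he' : ∀ x, c x ≠ x → x ≠ -1 → deriv e x = e x * x / ((c x - x) * (x + 1)))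
    (ρ p : ℝ) (hρ : 0 < ρ) (hπ0 : p / ρ ≠ 0) (hπ1 : p / ρ ≠ -1) (hc : c (p / ρ) ≠ p / ρ) :
    fderiv ℝ (fun q : ℝ × ℝ => q.1 / e (q.2 / q.1)) (ρ, p) (0, 1) ≠ 0 ∧
      (1 / fderiv ℝ (fun q : ℝ × ℝ => q.1 / e (q.2 / q.1)) (ρ, p) (0, 1)) *
          (ρ / e (p / ρ) / (ρ + p) -
            fderiv ℝ (fun q : ℝ × ℝ => q.1 / e (q.2 / q.1)) (ρ, p) (1, 0)) =
        c (p / ρ) := by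
  have hρ0 : ρ ≠ 0 := hρ.ne'
  set π : ℝ := p / ρ with hπdef
  have hA : e π ≠ 0 := (hepos π).ne'
  have hinv : HasFDerivAt (fun q : ℝ × ℝ => (q.1)⁻¹)
      ((-(ρ ^ 2)⁻¹) • ContinuousLinearMap.fst ℝ ℝ ℝ) (ρ, p) :=
    (hasDerivAt_inv hρ0).comp_hasFDerivAt (ρ, p) hasFDerivAt_fst
  have hg : HasFDerivAt (fun q : ℝ × ℝ => q.2 / q.1)
      (p • ((-(ρ ^ 2)⁻¹) • ContinuousLinearMap.fst ℝ ℝ ℝ) +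
        ρ⁻¹ • ContinuousLinearMap.snd ℝ ℝ ℝ) (ρ, p) := by
    simp only [div_eq_mul_inv]
    exact hasFDerivAt_snd.mul hinv
  have hu : HasDerivAt (fun x : ℝ => (e x)⁻¹) (-(deriv e π) / (e π) ^ 2) π :=
    ((he π).hasDerivAt).inv hA
  have hcomp : HasFDerivAt (fun q : ℝ × ℝ => (e (q.2 / q.1))⁻¹)
      ((-(deriv e π) / (e π) ^ 2) •
        (p • ((-(ρ ^ 2)⁻¹) • ContinuousLinearMap.fst ℝ ℝ ℝ) +
          ρ⁻¹ • ContinuousLinearMap.snd ℝ ℝ ℝ)) (ρ, p) :=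
    by have := hu.comp_hasFDerivAt (ρ, p) hg; exact this
  have hf : HasFDerivAt (fun q : ℝ × ℝ => q.1 / e (q.2 / q.1))
      (ρ • ((-(deriv e π) / (e π) ^ 2) •
          (p • ((-(ρ ^ 2)⁻¹) • ContinuousLinearMap.fst ℝ ℝ ℝ) +
            ρ⁻¹ • ContinuousLinearMap.snd ℝ ℝ ℝ)) +
        (e π)⁻¹ • ContinuousLinearMap.fst ℝ ℝ ℝ) (ρ, p) := by
    simp only [div_eq_mul_inv]
    exact hasFDerivAt_fst.mul hcomp
  rw [hf.fderiv]
  simp only [ContinuousLinearMap.add_apply, ContinuousLinearMap.smul_apply,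
    ContinuousLinearMap.coe_fst', ContinuousLinearMap.coe_snd', smul_eq_mul]
  set B : ℝ := deriv e π with hB
  have hBval : B = e π * π / ((c π - π) * (π + 1)) := he' π hc hπ1
  have hcd : c π - π ≠ 0 := sub_ne_zero.mpr hc
  have h1π : π + 1 ≠ 0 := by
    intro h; exact hπ1 (by linarith)
  have hB0 : B ≠ 0 := by
    rw [hBval]
    exact div_ne_zero (mul_ne_zero hA hπ0) (mul_ne_zero hcd h1π)
  have hp : p = π * ρ := by
    rw [hπdef, div_mul_cancel₀ p hρ0]
  clear_value π
  subst hp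
  have hval1 : ρ * (-B / e π ^ 2 * (π * ρ * (-(ρ ^ 2)⁻¹ * 0) + ρ⁻¹ * 1)) + (e π)⁻¹ * 0
      = -B / e π ^ 2 := by
    field_simp
    ring
  have hval2 : ρ * (-B / e π ^ 2 * (π * ρ * (-(ρ ^ 2)⁻¹ * 1) + ρ⁻¹ * 0)) + (e π)⁻¹ * 1
      = π * B / e π ^ 2 + (e π)⁻¹ := by
    field_simp; ring
  rw [hval1, hval2]
  constructor
  · exact div_ne_zero (neg_ne_zero.mpr hB0) (pow_ne_zero 2 hA)
  · rw [hBval]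
    have hρπ : ρ + π * ρ = (π + 1) * ρ := by ring
    rw [hρπ]
    field_simp
    ring
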